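/- Let A ⊆ N be a set of positive integers. If A is dense in N with respect to the p-adic metric (i.e., the closure of A in Z_p contains N), then the quotient set R(A) = { a/b : a, b ∈ A } is dense in Q_p. -/
import Mathlib


/-- If a set `A` of positive integers is `p`-adically dense in `ℕ` (its closure in `ℤ_p`
contains all natural numbers), then the quotient set `R(A)` is dense in `ℚ_p`. -/
theorem stmt_3 (p : ℕ) [Fact p.Prime] (A : Set ℕ) (hApos : ∀ a ∈ A, 0 < a)
    (hdense : ∀ n : ℕ, (n : ℤ_[p]) ∈ closure ((fun a : ℕ => (a : ℤ_[p])) '' A)) :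
    Dense {q : ℚ_[p] | ∃ a ∈ A, ∃ b ∈ A, q = (a : ℚ_[p]) / (b : ℚ_[p])} := by
  -- A is dense in ℤ_p
  have hdenseZ : ∀ z : ℤ_[p], z ∈ closure ((fun a : ℕ => (a : ℤ_[p])) '' A) := by
    intro z
    have h1 : Set.range (Nat.cast : ℕ → ℤ_[p]) ⊆ closure ((fun a : ℕ => (a : ℤ_[p])) '' A) := by
      rintro _ ⟨n, rfl⟩; exact hdense n
    have h2 := closure_mono h1
    rw [closure_closure] at h2
    have h3 := PadicInt.denseRange_natCast (p := p)
    rw [DenseRange, dense_iff_closure_eq] at h3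
    rw [h3] at h2
    exact h2 (Set.mem_univ z)
  rw [Metric.dense_iff]
  intro x ε hε
  -- choose b ∈ A with small norm
  have hpos : (0:ℝ) < 1 / (1 + ‖x‖) := by positivity
  have h0 := hdense 0
  rw [Metric.mem_closure_iff] at h0
  obtain ⟨y, hy, hdy⟩ := h0 _ hpos
  obtain ⟨b, hbA, rfl⟩ := hy
  have hbsmall : ‖(b : ℤ_[p])‖ < 1 / (1 + ‖x‖) := by
    simpa [dist_eq_norm] using hdy
  have hb0 : b ≠ 0 := (hApos b hbA).ne'
  have hbq : ((b : ℚ_[p])) ≠ 0 := Nat.cast_ne_zero.mpr hb0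
  have hbnorm : ‖(b : ℤ_[p])‖ = ‖(b : ℚ_[p])‖ := by
    rw [PadicInt.norm_def]; push_cast; ring_nf
  have hbnpos : 0 < ‖(b : ℚ_[p])‖ := norm_pos_iff.mpr hbq
  -- b * x is a p-adic integer
  have hbx : ‖(b : ℚ_[p]) * x‖ ≤ 1 := by
    rw [norm_mul]
    calc ‖(b : ℚ_[p])‖ * ‖x‖ ≤ (1 / (1 + ‖x‖)) * ‖x‖ := by
          apply mul_le_mul_of_nonneg_right _ (norm_nonneg x)
          rw [← hbnorm]; exact hbsmall.le
      _ ≤ 1 := by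
          rw [div_mul_eq_mul_div, mul_comm, ← div_mul_eq_mul_div, mul_one,
            div_le_one (by positivity)]
          linarith [norm_nonneg x]
  set z : ℤ_[p] := ⟨(b : ℚ_[p]) * x, hbx⟩ with hz
  -- choose a ∈ A close to z
  have hzc := hdenseZ z
  rw [Metric.mem_closure_iff] at hzc
  obtain ⟨w, hw, hdw⟩ := hzc (ε * ‖(b : ℚ_[p])‖) (by positivity)
  obtain ⟨a, haA, rfl⟩ := hw
  refine ⟨(a : ℚ_[p]) / (b : ℚ_[p]), ?_, a, haA, b, hbA, rfl⟩
  rw [Metric.mem_ball, dist_eq_norm]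
  have key : ‖(a : ℚ_[p]) - (b : ℚ_[p]) * x‖ < ε * ‖(b : ℚ_[p])‖ := by
    have : dist z ((a : ℕ) : ℤ_[p]) = ‖(a : ℚ_[p]) - (b : ℚ_[p]) * x‖ := by
      rw [dist_eq_norm, PadicInt.norm_def, PadicInt.coe_sub, norm_sub_rev, hz]
      norm_cast
    rw [← this]
    exact (dist_comm ((a : ℕ) : ℤ_[p]) z) ▸ hdw
  have : (a : ℚ_[p]) / (b : ℚ_[p]) - x = ((a : ℚ_[p]) - (b : ℚ_[p]) * x) / (b : ℚ_[p]) := by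
    field_simp
  rw [this, norm_div]
  rw [div_lt_iff₀ hbnpos]
  exact key
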